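/- For any function $f\colon\mathbb{R}\to\mathbb{R}$, the limit $D_{\mathcal{C}} f(0) = \lim_{h\to 0}[3f(h) - 5f(0) + 2f(-h)]/h$ exists if and only if $f'(0) = \lim_{h\to 0}[f(h)-f(0)]/h$ exists, and when both exist they are equal. -/
import Mathlib


open Filter

lemma neg_tendsto_punct : Tendsto (fun h : ℝ => -h) (nhdsWithin 0 {0}ᶜ) (nhdsWithin 0 {0}ᶜ) := by
  refine tendsto_nhdsWithin_of_tendsto_nhds_of_eventually_within _ ?_ ?_
  · simpa using (continuous_neg.tendsto (0:ℝ)).mono_left nhdsWithin_le_nhds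
  · filter_upwards [self_mem_nhdsWithin] with x hx
    simp only [Set.mem_compl_iff, Set.mem_singleton_iff] at hx ⊢
    exact neg_ne_zero.mpr hx

/-- The generalized Riemann derivative `lim [3f(h) - 5f(0) + 2f(-h)]/h` exists iff the
ordinary derivative `f'(0)` exists, with equal values. -/
theorem stmt_4 (f : ℝ → ℝ) (L : ℝ) :
    Tendsto (fun h : ℝ => (3 * f h - 5 * f 0 + 2 * f (-h)) / h) (nhdsWithin 0 {0}ᶜ) (nhds L) ↔
    Tendsto (fun h : ℝ => (f h - f 0) / h) (nhdsWithin 0 {0}ᶜ) (nhds L) := by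
  constructor
  · intro hg
    have hgneg : Tendsto (fun h : ℝ => (3 * f (-h) - 5 * f 0 + 2 * f h) / (-h))
        (nhdsWithin 0 {0}ᶜ) (nhds L) := by
      have := hg.comp neg_tendsto_punct
      simpa [Function.comp_def] using this
    have h5 : Tendsto (fun h : ℝ =>
        3/5 * ((3 * f h - 5 * f 0 + 2 * f (-h)) / h)
        + 2/5 * ((3 * f (-h) - 5 * f 0 + 2 * f h) / (-h)))
        (nhdsWithin 0 {0}ᶜ) (nhds (3/5 * L + 2/5 * L)) :=
      (hg.const_mul _).add (hgneg.const_mul _)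
    have key : ∀ h : ℝ, h ≠ 0 →
        3/5 * ((3 * f h - 5 * f 0 + 2 * f (-h)) / h)
        + 2/5 * ((3 * f (-h) - 5 * f 0 + 2 * f h) / (-h)) = (f h - f 0) / h := by
      intro h hh
      field_simp
      ring
    have : (3:ℝ)/5 * L + 2/5 * L = L := by ring
    rw [this] at h5
    refine h5.congr' ?_
    filter_upwards [self_mem_nhdsWithin] with h hh
    exact key h hh
  · intro hd
    have hdneg : Tendsto (fun h : ℝ => (f (-h) - f 0) / (-h))
        (nhdsWithin 0 {0}ᶜ) (nhds L) := by
      have := hd.comp neg_tendsto_punct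
      simpa [Function.comp_def] using this
    have h5 : Tendsto (fun h : ℝ => 3 * ((f h - f 0) / h) - 2 * ((f (-h) - f 0) / (-h)))
        (nhdsWithin 0 {0}ᶜ) (nhds (3 * L - 2 * L)) :=
      (hd.const_mul _).sub (hdneg.const_mul _)
    have : (3:ℝ) * L - 2 * L = L := by ring
    rw [this] at h5
    refine h5.congr' ?_
    filter_upwards [self_mem_nhdsWithin] with h hh
    field_simp
    ring
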